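/- For every natural number x ≥ 1, f(x) is the minimum of the set of natural numbers not belonging to {f(i) : i < x} ∪ {f(i) + i : i < x}. -/

import Mathlib

open scoped symmDiff

noncomputable def phi : ℝ := (1 + Real.sqrt 5) / 2

noncomputable def f (n : ℕ) : ℕ := ⌊phi * n⌋₊

lemma phi_eq : phi = Real.goldenRatio := rfl

lemma one_lt_phi : 1 < phi := Real.one_lt_goldenRatio

lemma phi_pos : 0 < phi := Real.goldenRatio_pos

lemma phi_sq : phi ^ 2 = phi + 1 := Real.goldenRatio_sq

lemma phi_conj : phi.HolderConjugate (phi + 1) := by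
  constructor
  · have h0 : 0 < phi := phi_pos
    have h1 : 0 < phi + 1 := by linarith
    have h2 := phi_sq
    field_simp
    nlinarith [h2]
  · exact phi_pos
  · linarith [phi_pos]

lemma f_cast (i : ℕ) : (f i : ℤ) = ⌊(i : ℝ) * phi⌋ := by
  rw [f, mul_comm, Int.natCast_floor_eq_floor
    (mul_nonneg (Nat.cast_nonneg i) phi_pos.le)]

lemma g_cast (i : ℕ) : ((f i + i : ℕ) : ℤ) = ⌊(i : ℝ) * (phi + 1)⌋ := by
  have h : (i : ℝ) * (phi + 1) = (i : ℝ) * phi + (i : ℤ) := by push_cast; ring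
  rw [h, Int.floor_add_intCast, Nat.cast_add, f_cast]

lemma f_strictMono : StrictMono f := by
  have h : ∀ i, f i + 1 ≤ f (i + 1) := by
    intro i
    have hnn : (0:ℝ) ≤ phi * i := mul_nonneg phi_pos.le (Nat.cast_nonneg i)
    have h1 : phi * i + 1 ≤ phi * (i + 1) := by
      have := one_lt_phi.le
      nlinarith [Nat.cast_nonneg (α := ℝ) i]
    calc f i + 1 = ⌊phi * i + 1⌋₊ := by rw [f, Nat.floor_add_one hnn]
      _ ≤ f (i + 1) := by
          rw [f]; exact Nat.floor_le_floor (by push_cast; linarith)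
  exact strictMono_nat_of_lt_succ fun n => Nat.lt_of_succ_le (h n)

lemma f_ge (i : ℕ) : i ≤ f i := by
  have : (i : ℝ) ≤ phi * i := by nlinarith [one_lt_phi.le, Nat.cast_nonneg (α := ℝ) i]
  simpa [f] using Nat.le_floor this

lemma mem_A_iff (n : ℕ) :
    ((n : ℤ) ∈ {x | ∃ k > 0, beattySeq phi k = x}) ↔ ∃ i : ℕ, 1 ≤ i ∧ n = f i := by
  constructor
  · rintro ⟨k, hk, hkn⟩
    refine ⟨k.toNat, by omega, ?_⟩
    have hc : ((k.toNat : ℕ) : ℝ) = (k : ℝ) := by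
      exact_mod_cast Int.toNat_of_nonneg hk.le
    have h : (f k.toNat : ℤ) = (n : ℤ) := by
      rw [f_cast, hc, ← hkn, beattySeq]
    exact_mod_cast h.symm
  · rintro ⟨i, hi, rfl⟩
    refine ⟨i, by exact_mod_cast hi, ?_⟩
    simp only [beattySeq, Int.cast_natCast]
    exact (f_cast i).symm

lemma mem_B_iff (n : ℕ) :
    ((n : ℤ) ∈ {x | ∃ k > 0, beattySeq (phi + 1) k = x}) ↔ ∃ i : ℕ, 1 ≤ i ∧ n = f i + i := by
  constructor
  · rintro ⟨k, hk, hkn⟩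
    refine ⟨k.toNat, by omega, ?_⟩
    have hc : ((k.toNat : ℕ) : ℝ) = (k : ℝ) := by
      exact_mod_cast Int.toNat_of_nonneg hk.le
    have h : ((f k.toNat + k.toNat : ℕ) : ℤ) = (n : ℤ) := by
      rw [g_cast, hc, ← hkn, beattySeq]
    exact_mod_cast h.symm
  · rintro ⟨i, hi, rfl⟩
    refine ⟨i, by exact_mod_cast hi, ?_⟩
    simp only [beattySeq, Int.cast_natCast]
    exact (g_cast i).symm

lemma rayleigh_phi :
    {x | ∃ k > 0, beattySeq phi k = x} ∆ {x | ∃ k > 0, beattySeq (phi + 1) k = x}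
      = {n : ℤ | 0 < n} :=
  Irrational.beattySeq_symmDiff_beattySeq_pos phi_conj (phi_eq ▸ Real.goldenRatio_irrational)

theorem f_eq_sInf (x : ℕ) (hx : 1 ≤ x) :
    f x = sInf {n : ℕ | n ∉ ({m : ℕ | ∃ i < x, m = f i} ∪ {m : ℕ | ∃ i < x, m = f i + i})} := by
  set S := {n : ℕ | n ∉ ({m : ℕ | ∃ i < x, m = f i} ∪ {m : ℕ | ∃ i < x, m = f i + i})} with hS
  have hfx_pos : 1 ≤ f x := le_trans hx (f_ge x)
  have hf0 : f 0 = 0 := by simp [f]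
  have hmem : f x ∈ S := by
    intro h
    rcases h with ⟨i, hi, hfi⟩ | ⟨i, hi, hfi⟩
    · exact absurd hfi.symm (f_strictMono hi).ne
    · rcases Nat.eq_zero_or_pos i with rfl | hipos
      · omega
      · have hA : ((f x : ℕ) : ℤ) ∈ {y | ∃ k > 0, beattySeq phi k = y} :=
          (mem_A_iff _).2 ⟨x, hx, rfl⟩
        have hB : ((f x : ℕ) : ℤ) ∈ {y | ∃ k > 0, beattySeq (phi + 1) k = y} :=
          (mem_B_iff _).2 ⟨i, hipos, hfi⟩
        have hpos : ((f x : ℕ) : ℤ) ∈ {n : ℤ | 0 < n} := by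
          simp only [Set.mem_setOf_eq]; exact_mod_cast hfx_pos
        rw [← rayleigh_phi, Set.mem_symmDiff] at hpos
        tauto
  refine le_antisymm ?_ (Nat.sInf_le hmem)
  refine le_csInf ⟨f x, hmem⟩ fun n hn => ?_
  by_contra hlt
  push_neg at hlt
  apply hn
  rcases Nat.eq_zero_or_pos n with rfl | hnpos
  · left; exact ⟨0, hx, hf0.symm⟩
  · have hpos : ((n : ℕ) : ℤ) ∈ {m : ℤ | 0 < m} := by
      simp only [Set.mem_setOf_eq]; exact_mod_cast hnpos
    rw [← rayleigh_phi, Set.mem_symmDiff] at hpos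
    rcases hpos with ⟨hA, _⟩ | ⟨hB, _⟩
    · obtain ⟨i, hi1, rfl⟩ := (mem_A_iff n).1 hA
      left
      exact ⟨i, f_strictMono.lt_iff_lt.mp hlt, rfl⟩
    · obtain ⟨i, hi1, rfl⟩ := (mem_B_iff n).1 hB
      right
      refine ⟨i, ?_, rfl⟩
      by_contra hix
      push_neg at hix
      have := f_strictMono.le_iff_le.mpr hix
      omega
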